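/- For every integer r with 1 ≤ r ≤ s_n, writing Δ_b(r) := (1/q) Σ_{μ ∈ F_q, μ ≠ 0} Σ_{x ∈ X^n(r)} ψ(μ · f_b(x)), one has the mean-square bound Σ_{b ∈ F_q} |Δ_b(r)|² ≤ q^{n−1} · r. -/

import Mathlib

open Finset ComplexConjugate

section Aux

/-- An additive character maps sums to products. -/
lemma addChar_map_sum {A M : Type*} [AddCommMonoid A] [CommMonoid M] (φ : AddChar A M)
    {ι : Type*} (s : Finset ι) (f : ι → A) : φ (∑ i ∈ s, f i) = ∏ i ∈ s, φ (f i) := by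
  classical
  induction s using Finset.induction_on with
  | empty => simp
  | @insert _ _ hi ih =>
      rw [Finset.sum_insert hi, Finset.prod_insert hi, AddChar.map_add_eq_mul, ih]

variable {F : Type*} [Field F] [Fintype F] [DecidableEq F] {ψ : AddChar F ℂ}

/-- Orthogonality of additive characters of a finite field. -/
lemma sum_char_mul (hψ : ψ ≠ 1) (c : F) :
    ∑ b : F, ψ (b * c) = if c = 0 then (Fintype.card F : ℂ) else 0 := by
  rw [AddChar.sum_mulShift c (AddChar.IsPrimitive.of_ne_one hψ)]
  split_ifs <;> simp

/-- Second moment of a character sum over an injectively parametrised set. -/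
lemma moment (hψ : ψ ≠ 1) (t : Finset ℕ) (f : ℕ → F) (hf : Set.InjOn f t) :
    ∑ μ : F, Complex.normSq (∑ x ∈ t, ψ (μ * f x)) = (Fintype.card F : ℝ) * t.card := by
  have key : ∀ μ : F, ((Complex.normSq (∑ x ∈ t, ψ (μ * f x)) : ℝ) : ℂ)
      = ∑ x ∈ t, ∑ y ∈ t, ψ (μ * (f x - f y)) := by
    intro μ
    rw [← Complex.mul_conj, map_sum, Finset.sum_mul_sum]
    refine Finset.sum_congr rfl fun x _ => Finset.sum_congr rfl fun y _ => ?_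
    rw [← AddChar.map_neg_eq_conj, ← AddChar.map_add_eq_mul]
    congr 1
    ring
  have h2 : ((∑ μ : F, Complex.normSq (∑ x ∈ t, ψ (μ * f x)) : ℝ) : ℂ)
      = (Fintype.card F : ℂ) * t.card := by
    push_cast
    calc ∑ μ : F, ((Complex.normSq (∑ x ∈ t, ψ (μ * f x)) : ℝ) : ℂ)
        = ∑ μ : F, ∑ x ∈ t, ∑ y ∈ t, ψ (μ * (f x - f y)) :=
          Finset.sum_congr rfl fun μ _ => key μ
      _ = ∑ x ∈ t, ∑ y ∈ t, ∑ μ : F, ψ (μ * (f x - f y)) := by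
          rw [Finset.sum_comm]
          exact Finset.sum_congr rfl fun x _ => Finset.sum_comm
      _ = ∑ x ∈ t, ∑ y ∈ t, (if x = y then (Fintype.card F : ℂ) else 0) := by
          refine Finset.sum_congr rfl fun x hx => Finset.sum_congr rfl fun y hy => ?_
          rw [sum_char_mul hψ (f x - f y)]
          congr 1
          rw [sub_eq_zero]
          exact propext ⟨fun h => hf hx hy h, fun h => by rw [h]⟩
      _ = ∑ x ∈ t, (Fintype.card F : ℂ) := by
          refine Finset.sum_congr rfl fun x hx => ?_
          simp [Finset.sum_ite_eq t x (fun _ => (Fintype.card F : ℂ)), hx]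
      _ = (Fintype.card F : ℂ) * t.card := by
          rw [Finset.sum_const, nsmul_eq_mul, mul_comm]
  exact_mod_cast h2

/-- The complete character sum over a cyclic subgroup of `Fˣ` has square modulus at
most `q`. -/
lemma subgroup_bound (hψ : ψ ≠ 1) (u : Fˣ) {c : F} (hc : c ≠ 0) :
    Complex.normSq (∑ x ∈ Finset.range (orderOf u), ψ (c * (u : F) ^ x))
      ≤ (Fintype.card F : ℝ) := by
  set s := orderOf u with hs
  have hs0 : 0 < s := orderOf_pos u
  set T : F → ℂ := fun d => ∑ x ∈ Finset.range s, ψ (d * (u : F) ^ x) with hT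
  have husF : (u : F) ^ s = 1 := by
    rw [← Units.val_pow_eq_pow_val, pow_orderOf_eq_one, Units.val_one]
  have step : ∀ d : F, T (d * (u : F)) = T d := by
    intro d
    have h0 : T (d * (u : F)) = ∑ x ∈ Finset.range s, ψ (d * (u : F) ^ (x + 1)) := by
      refine Finset.sum_congr rfl fun x _ => ?_
      congr 1
      rw [pow_succ]
      ring
    have h1 : ∑ x ∈ Finset.range (s + 1), ψ (d * (u : F) ^ x)
        = (∑ x ∈ Finset.range s, ψ (d * (u : F) ^ (x + 1))) + ψ (d * (u : F) ^ 0) :=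
      Finset.sum_range_succ' _ s
    have h2 : ∑ x ∈ Finset.range (s + 1), ψ (d * (u : F) ^ x)
        = (∑ x ∈ Finset.range s, ψ (d * (u : F) ^ x)) + ψ (d * (u : F) ^ s) :=
      Finset.sum_range_succ _ s
    have h3 : ψ (d * (u : F) ^ s) = ψ (d * (u : F) ^ 0) := by rw [husF, pow_zero]
    have h4 := h1.symm.trans h2
    rw [h3] at h4
    rw [h0]
    exact add_right_cancel h4
  have stepk : ∀ k : ℕ, T (c * (u : F) ^ k) = T c := by
    intro k
    induction k with
    | zero => simp
    | succ k ih => rw [pow_succ, ← mul_assoc, step, ih]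
  have hinj : ∀ x ∈ Finset.range s, ∀ y ∈ Finset.range s,
      (u : F) ^ x = (u : F) ^ y → x = y := by
    intro x hx y hy hxy
    have hxy' : u ^ x = u ^ y := Units.ext (by push_cast; exact hxy)
    exact pow_injOn_Iio_orderOf (Set.mem_Iio.2 (Finset.mem_range.1 hx))
      (Set.mem_Iio.2 (Finset.mem_range.1 hy)) hxy'
  have key : (s : ℝ) * Complex.normSq (T c) ≤ ∑ d : F, Complex.normSq (T d) := by
    have e1 : ∑ k ∈ Finset.range s, Complex.normSq (T (c * (u : F) ^ k))
        = (s : ℝ) * Complex.normSq (T c) := by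
      rw [Finset.sum_congr rfl fun k _ => by rw [stepk k]]
      rw [Finset.sum_const, Finset.card_range, nsmul_eq_mul]
    have hinj2 : ∀ x ∈ Finset.range s, ∀ y ∈ Finset.range s,
        c * (u : F) ^ x = c * (u : F) ^ y → x = y := by
      intro x hx y hy hxy
      exact hinj x hx y hy (mul_left_cancel₀ hc hxy)
    have e2 : ∑ d ∈ (Finset.range s).image (fun k => c * (u : F) ^ k),
        Complex.normSq (T d) = ∑ k ∈ Finset.range s, Complex.normSq (T (c * (u : F) ^ k)) :=
      Finset.sum_image hinj2
    rw [← e1, ← e2]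
    exact Finset.sum_le_sum_of_subset_of_nonneg (Finset.subset_univ _)
      (fun _ _ _ => Complex.normSq_nonneg _)
  have total : ∑ d : F, Complex.normSq (T d) = (Fintype.card F : ℝ) * s := by
    have hinj3 : Set.InjOn (fun x : ℕ => (u : F) ^ x) (Finset.range s) :=
      fun x hx y hy h => hinj x hx y hy h
    simpa using moment hψ (Finset.range s) (fun x => (u : F) ^ x) hinj3
  have hsR : (0 : ℝ) < (s : ℝ) := by exact_mod_cast hs0
  nlinarith [key, total, Complex.normSq_nonneg (T c)]

end Aux

/-- The box `X^{n+1}(r) = {0,…,s₁−1} × ⋯ × {0,…,s_n−1} × {0,…,r−1}` of exponent tuples,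
where `sᵢ` is the multiplicative order of `g i` and the last coordinate is truncated
at `r`. -/
noncomputable def expBox {F : Type*} [Monoid F] {n : ℕ} (g : Fin (n + 1) → Fˣ) (r : ℕ) :
    Finset (Fin (n + 1) → ℕ) :=
  Fintype.piFinset fun i => Finset.range (if i = Fin.last n then r else orderOf (g i))

/-- The exponential polynomial `f_b(x) = a₁g₁^{x₁} + ⋯ + a_{n+1}g_{n+1}^{x_{n+1}} − b`. -/
noncomputable def expPoly {F : Type*} [Field F] {n : ℕ} (a g : Fin (n + 1) → Fˣ) (b : F)
    (x : Fin (n + 1) → ℕ) : F :=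
  (∑ i, (a i : F) * (g i : F) ^ x i) - b

/-- `S_{f_b}(r)`: the set of zeros of `f_b` in the box `X^{n+1}(r)`. -/
noncomputable def solSet {F : Type*} [Field F] [DecidableEq F] {n : ℕ} (a g : Fin (n + 1) → Fˣ)
    (b : F) (r : ℕ) : Finset (Fin (n + 1) → ℕ) :=
  (expBox g r).filter fun x => expPoly a g b x = 0

/-- `N_{f_b}(r) = #S_{f_b}(r)`. -/
noncomputable def solCount {F : Type*} [Field F] [DecidableEq F] {n : ℕ} (a g : Fin (n + 1) → Fˣ)
    (b : F) (r : ℕ) : ℕ :=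
  (solSet a g b r).card

/-- `P = ∏_{l=1}^{n} s_l`, the product of the multiplicative orders of all the `g i`
except the last one. -/
noncomputable def ordProd {F : Type*} [Monoid F] {n : ℕ} (g : Fin (n + 1) → Fˣ) : ℕ :=
  ∏ i : Fin n, orderOf (g i.castSucc)

/-- For every integer `1 ≤ r ≤ s_{n+1}`, writing
`Δ_b(r) = (1/q) Σ_{μ ≠ 0} Σ_{x ∈ X^{n+1}(r)} ψ(μ·f_b(x))`, one has the mean-square
bound `Σ_{b ∈ F} |Δ_b(r)|² ≤ q^{(n+1)−1} · r`. -/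
theorem statement4 (p ν : ℕ) (hp : p.Prime) (hν : 1 ≤ ν)
    (F : Type*) [Field F] [Fintype F] [DecidableEq F]
    (hq : Fintype.card F = p ^ ν)
    (ψ : AddChar F ℂ) (hψ : ψ ≠ 1)
    (n : ℕ) (hn : 1 ≤ n)
    (a g : Fin (n + 1) → Fˣ)
    (r : ℕ) (hr1 : 1 ≤ r) (hrs : r ≤ orderOf (g (Fin.last n))) :
    (∑ b : F, ‖1 / (Fintype.card F : ℂ) *
        ∑ μ ∈ Finset.univ.filter (fun μ : F => μ ≠ 0),
          ∑ x ∈ expBox g r, ψ (μ * expPoly a g b x)‖ ^ 2) ≤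
      (Fintype.card F : ℝ) ^ n * (r : ℝ) := by
  classical
  have hq0 : 0 < Fintype.card F := Fintype.card_pos
  have hqC : ((Fintype.card F : ℂ)) ≠ 0 := Nat.cast_ne_zero.2 hq0.ne'
  have hqR : (0 : ℝ) < (Fintype.card F : ℝ) := by exact_mod_cast hq0
  set q : ℂ := (Fintype.card F : ℂ) with hqdef
  set Q : ℝ := (Fintype.card F : ℝ) with hQdef
  set s₀ : Finset F := Finset.univ.filter (fun μ : F => μ ≠ 0) with hs₀
  set A : (Fin (n + 1) → ℕ) → F := fun x => ∑ i, (a i : F) * (g i : F) ^ x i with hA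
  set S : F → ℂ := fun μ => ∑ x ∈ expBox g r, ψ (μ * A x) with hS
  set T : Fin (n + 1) → F → ℂ := fun i μ =>
    ∑ x ∈ Finset.range (if i = Fin.last n then r else orderOf (g i)),
      ψ (μ * ((a i : F) * (g i : F) ^ x)) with hT
  -- rewrite the inner sum
  have inner : ∀ b μ : F,
      ∑ x ∈ expBox g r, ψ (μ * expPoly a g b x) = S μ * ψ (-(μ * b)) := by
    intro b μ
    rw [hS]
    rw [Finset.sum_mul]
    refine Finset.sum_congr rfl fun x _ => ?_
    rw [← AddChar.map_add_eq_mul]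
    congr 1
    simp only [expPoly, hA]
    ring
  set Δ : F → ℂ := fun b => 1 / q * ∑ μ ∈ s₀, S μ * ψ (-(μ * b)) with hΔ
  have goal_eq : ∀ b : F,
      (1 / q * ∑ μ ∈ s₀, ∑ x ∈ expBox g r, ψ (μ * expPoly a g b x)) = Δ b := by
    intro b
    rw [hΔ]
    congr 1
    exact Finset.sum_congr rfl fun μ _ => inner b μ
  -- Parseval
  have orth : ∀ c : F, ∑ b : F, ψ (c * b) = if c = 0 then q else 0 := by
    intro c
    rw [← sum_char_mul hψ c]
    exact Finset.sum_congr rfl fun b _ => by rw [mul_comm]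
  have hb : ∀ b : F, Δ b * conj (Δ b)
      = (1 / q) ^ 2 * ∑ μ ∈ s₀, ∑ μ' ∈ s₀, S μ * conj (S μ') * ψ ((μ' - μ) * b) := by
    intro b
    have hconjq : conj (1 / q) = 1 / q := by
      rw [hqdef]
      simp
    calc Δ b * conj (Δ b)
        = (1 / q) ^ 2 * ((∑ μ ∈ s₀, S μ * ψ (-(μ * b)))
            * ∑ μ' ∈ s₀, conj (S μ' * ψ (-(μ' * b)))) := by
          rw [hΔ, map_mul, map_sum, hconjq]
          ring
      _ = (1 / q) ^ 2 * ∑ μ ∈ s₀, ∑ μ' ∈ s₀,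
            (S μ * ψ (-(μ * b))) * conj (S μ' * ψ (-(μ' * b))) := by
          rw [Finset.sum_mul_sum]
      _ = (1 / q) ^ 2 * ∑ μ ∈ s₀, ∑ μ' ∈ s₀, S μ * conj (S μ') * ψ ((μ' - μ) * b) := by
          congr 1
          refine Finset.sum_congr rfl fun μ _ => Finset.sum_congr rfl fun μ' _ => ?_
          rw [map_mul]
          have h2 : conj (ψ (-(μ' * b))) = ψ (μ' * b) := by
            rw [← AddChar.map_neg_eq_conj, neg_neg]
          have h3 : ψ (-(μ * b)) * ψ (μ' * b) = ψ ((μ' - μ) * b) := by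
            rw [← AddChar.map_add_eq_mul]
            congr 1
            ring
          rw [h2]
          calc S μ * ψ (-(μ * b)) * (conj (S μ') * ψ (μ' * b))
              = S μ * conj (S μ') * (ψ (-(μ * b)) * ψ (μ' * b)) := by ring
            _ = S μ * conj (S μ') * ψ ((μ' - μ) * b) := by rw [h3]
  have hsum : ∑ b : F, Δ b * conj (Δ b) = 1 / q * ∑ μ ∈ s₀, S μ * conj (S μ) := by
    calc ∑ b : F, Δ b * conj (Δ b)
        = ∑ b : F, (1 / q) ^ 2 * ∑ μ ∈ s₀, ∑ μ' ∈ s₀,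
            S μ * conj (S μ') * ψ ((μ' - μ) * b) :=
          Finset.sum_congr rfl fun b _ => hb b
      _ = (1 / q) ^ 2 * ∑ μ ∈ s₀, ∑ μ' ∈ s₀,
            S μ * conj (S μ') * ∑ b : F, ψ ((μ' - μ) * b) := by
          rw [← Finset.mul_sum]
          congr 1
          rw [Finset.sum_comm]
          refine Finset.sum_congr rfl fun μ _ => ?_
          rw [Finset.sum_comm]
          refine Finset.sum_congr rfl fun μ' _ => ?_
          rw [Finset.mul_sum]
      _ = (1 / q) ^ 2 * ∑ μ ∈ s₀, S μ * conj (S μ) * q := by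
          congr 1
          refine Finset.sum_congr rfl fun μ hμ => ?_
          have step1 : ∀ μ' ∈ s₀, S μ * conj (S μ') * ∑ b : F, ψ ((μ' - μ) * b)
              = if μ' = μ then S μ * conj (S μ') * q else 0 := by
            intro μ' _
            rw [orth (μ' - μ)]
            by_cases h : μ' = μ
            · rw [if_pos (sub_eq_zero.2 h), if_pos h]
            · rw [if_neg (sub_ne_zero.2 h), if_neg h, mul_zero]
          rw [Finset.sum_congr rfl step1,
            Finset.sum_ite_eq' s₀ μ (fun μ' => S μ * conj (S μ') * q), if_pos hμ]
      _ = 1 / q * ∑ μ ∈ s₀, S μ * conj (S μ) := by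
          rw [← Finset.sum_mul]
          field_simp
  have parseval : ∑ b : F, Complex.normSq (Δ b)
      = 1 / Q * ∑ μ ∈ s₀, Complex.normSq (S μ) := by
    have hcast : ((∑ b : F, Complex.normSq (Δ b) : ℝ) : ℂ)
        = ((1 / Q * ∑ μ ∈ s₀, Complex.normSq (S μ) : ℝ) : ℂ) := by
      calc ((∑ b : F, Complex.normSq (Δ b) : ℝ) : ℂ)
          = ∑ b : F, ((Complex.normSq (Δ b) : ℝ) : ℂ) := by push_cast; rfl
        _ = ∑ b : F, Δ b * conj (Δ b) :=
            Finset.sum_congr rfl fun b _ => (Complex.mul_conj _).symm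
        _ = 1 / q * ∑ μ ∈ s₀, S μ * conj (S μ) := hsum
        _ = 1 / q * ∑ μ ∈ s₀, ((Complex.normSq (S μ) : ℝ) : ℂ) := by
            rw [Finset.sum_congr rfl fun μ _ => (Complex.mul_conj (S μ))]
        _ = ((1 / Q * ∑ μ ∈ s₀, Complex.normSq (S μ) : ℝ) : ℂ) := by
            rw [hqdef, hQdef]
            push_cast
            ring
    exact_mod_cast hcast
  -- factorization
  have factor : ∀ μ : F, S μ = ∏ i : Fin (n + 1), T i μ := by
    intro μ
    have h1 : ∀ x : Fin (n + 1) → ℕ,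
        ψ (μ * A x) = ∏ i : Fin (n + 1), ψ (μ * ((a i : F) * (g i : F) ^ x i)) := by
      intro x
      have : μ * A x = ∑ i : Fin (n + 1), μ * ((a i : F) * (g i : F) ^ x i) := by
        rw [hA, Finset.mul_sum]
      rw [this, addChar_map_sum]
    calc S μ = ∑ x ∈ expBox g r, ∏ i : Fin (n + 1), ψ (μ * ((a i : F) * (g i : F) ^ x i)) :=
          Finset.sum_congr rfl fun x _ => h1 x
      _ = ∏ i : Fin (n + 1), ∑ x ∈ Finset.range (if i = Fin.last n then r else orderOf (g i)),
            ψ (μ * ((a i : F) * (g i : F) ^ x)) := by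
          simp only [expBox]
          rw [Finset.prod_univ_sum]
      _ = ∏ i : Fin (n + 1), T i μ := rfl
  -- bound each complete factor
  have bound : ∀ μ ∈ s₀, Complex.normSq (S μ)
      ≤ Q ^ n * Complex.normSq (T (Fin.last n) μ) := by
    intro μ hμ
    have hμ0 : μ ≠ 0 := (Finset.mem_filter.1 hμ).2
    rw [factor μ, Fin.prod_univ_castSucc, map_mul]
    have hfac : ∀ j : Fin n, Complex.normSq (T j.castSucc μ) ≤ Q := by
      intro j
      have hne : (j.castSucc : Fin (n + 1)) ≠ Fin.last n := (Fin.castSucc_lt_last j).ne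
      have hTj : T j.castSucc μ = ∑ x ∈ Finset.range (orderOf (g j.castSucc)),
          ψ ((μ * (a j.castSucc : F)) * (g j.castSucc : F) ^ x) := by
        rw [hT]
        simp only [if_neg hne]
        exact Finset.sum_congr rfl fun x _ => by rw [mul_assoc]
      rw [hTj]
      exact subgroup_bound hψ (g j.castSucc)
        (mul_ne_zero hμ0 (Units.ne_zero (a j.castSucc)))
    calc Complex.normSq (∏ j : Fin n, T j.castSucc μ) * Complex.normSq (T (Fin.last n) μ)
        = (∏ j : Fin n, Complex.normSq (T j.castSucc μ)) * Complex.normSq (T (Fin.last n) μ) := by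
          rw [map_prod]
      _ ≤ (∏ _j : Fin n, Q) * Complex.normSq (T (Fin.last n) μ) := by
          refine mul_le_mul_of_nonneg_right ?_ (Complex.normSq_nonneg _)
          exact Finset.prod_le_prod (fun j _ => Complex.normSq_nonneg _) (fun j _ => hfac j)
      _ = Q ^ n * Complex.normSq (T (Fin.last n) μ) := by
          rw [Finset.prod_const, Finset.card_univ, Fintype.card_fin]
  -- second moment of the truncated factor
  have trunc : ∑ μ : F, Complex.normSq (T (Fin.last n) μ) = Q * r := by
    have hTl : ∀ μ : F, T (Fin.last n) μ = ∑ x ∈ Finset.range r,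
        ψ (μ * ((a (Fin.last n) : F) * (g (Fin.last n) : F) ^ x)) := by
      intro μ
      rw [hT]
      simp
    have hinj : Set.InjOn (fun x : ℕ => (a (Fin.last n) : F) * (g (Fin.last n) : F) ^ x)
        (Finset.range r) := by
      intro x hx y hy hxy
      have hx' : x < orderOf (g (Fin.last n)) :=
        lt_of_lt_of_le (Finset.mem_range.1 (by simpa using hx)) hrs
      have hy' : y < orderOf (g (Fin.last n)) :=
        lt_of_lt_of_le (Finset.mem_range.1 (by simpa using hy)) hrs
      have h1 : (g (Fin.last n) : F) ^ x = (g (Fin.last n) : F) ^ y :=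
        mul_left_cancel₀ (Units.ne_zero (a (Fin.last n))) hxy
      have h2 : (g (Fin.last n)) ^ x = (g (Fin.last n)) ^ y :=
        Units.ext (by push_cast; exact h1)
      exact pow_injOn_Iio_orderOf (Set.mem_Iio.2 hx') (Set.mem_Iio.2 hy') h2
    have := moment hψ (Finset.range r)
      (fun x => (a (Fin.last n) : F) * (g (Fin.last n) : F) ^ x) hinj
    rw [Finset.card_range] at this
    calc ∑ μ : F, Complex.normSq (T (Fin.last n) μ)
        = ∑ μ : F, Complex.normSq (∑ x ∈ Finset.range r,
            ψ (μ * ((a (Fin.last n) : F) * (g (Fin.last n) : F) ^ x))) :=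
          Finset.sum_congr rfl fun μ _ => by rw [hTl μ]
      _ = Q * r := this
  -- assemble
  have lhs_eq : (∑ b : F, ‖1 / (Fintype.card F : ℂ) *
        ∑ μ ∈ Finset.univ.filter (fun μ : F => μ ≠ 0),
          ∑ x ∈ expBox g r, ψ (μ * expPoly a g b x)‖ ^ 2)
      = ∑ b : F, Complex.normSq (Δ b) := by
    refine Finset.sum_congr rfl fun b _ => ?_
    rw [Complex.sq_norm]
    congr 1
    exact goal_eq b
  rw [lhs_eq, parseval]
  have step1 : ∑ μ ∈ s₀, Complex.normSq (S μ)
      ≤ Q ^ n * ∑ μ ∈ s₀, Complex.normSq (T (Fin.last n) μ) := by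
    rw [Finset.mul_sum]
    exact Finset.sum_le_sum fun μ hμ => by
      simpa using bound μ hμ
  have step2 : ∑ μ ∈ s₀, Complex.normSq (T (Fin.last n) μ)
      ≤ ∑ μ : F, Complex.normSq (T (Fin.last n) μ) :=
    Finset.sum_le_sum_of_subset_of_nonneg (Finset.subset_univ _)
      (fun _ _ _ => Complex.normSq_nonneg _)
  have hQn : (0 : ℝ) ≤ Q ^ n := le_of_lt (pow_pos hqR n)
  calc 1 / Q * ∑ μ ∈ s₀, Complex.normSq (S μ)
      ≤ 1 / Q * (Q ^ n * ∑ μ ∈ s₀, Complex.normSq (T (Fin.last n) μ)) := by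
        refine mul_le_mul_of_nonneg_left step1 ?_
        positivity
    _ ≤ 1 / Q * (Q ^ n * (Q * r)) := by
        refine mul_le_mul_of_nonneg_left ?_ (by positivity)
        refine mul_le_mul_of_nonneg_left ?_ hQn
        rw [← trunc]
        exact step2
    _ = Q ^ n * r := by
        field_simp
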